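/- Let Q ∈ (1/2, 1), n ≥ 2, L > 0, x₁, …, xₙ ∈ (0,1), and let F₀, F₁ : (0,1) → [0,1) satisfy F₁(x) ≤ F₀(x) < 1 for all x and F₀(x) = F₁(x) = 0 for all x ≤ 1−Q. Suppose the indifference system L·x_k/(1−x_k) = ∏_{m≠k} (1−F₀(x_m))/(1−F₁(x_m)) holds for every k, and that some player i delegates, i.e. x_i ≤ 1−Q. Then for every j ≠ i one has ((1−x_j)/x_j)·(1−F₁(x_j))/(1−F₀(x_j)) ≥ Q/(1−Q), the condition under which an investment by a player with threshold x_j would start an up-cascade in the information-cascades setting. If in addition (1−F₁(x))/(1−F₀(x)) ≤ Q/(1−Q) holds for all x, then x_j ≤ 1/2 for every j ∈ {1,…,n}. -/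

import Mathlib

open Finset

/-- Delegation: in a unanimity game, if player `i` delegates
(`x_i ≤ 1−Q`), then every other player's threshold satisfies the up-cascade trigger
condition `((1−x_j)/x_j)·(1−F₁(x_j))/(1−F₀(x_j)) ≥ Q/(1−Q)`; if moreover
`(1−F₁)/(1−F₀) ≤ Q/(1−Q)` everywhere, then all thresholds are at most `1/2`. -/
theorem delegation_unanimity
    (Q : ℝ) (hQhalf : 1/2 < Q) (hQ1 : Q < 1)
    (n : ℕ) (hn : 2 ≤ n) (L : ℝ) (hL : 0 < L)
    (x : Fin n → ℝ) (hx : ∀ k, x k ∈ Set.Ioo (0 : ℝ) 1)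
    (F0 F1 : ℝ → ℝ)
    (hF : ∀ t ∈ Set.Ioo (0 : ℝ) 1, 0 ≤ F1 t ∧ F1 t ≤ F0 t ∧ F0 t < 1)
    (hFzero : ∀ t : ℝ, t ≤ 1 - Q → F0 t = 0 ∧ F1 t = 0)
    (hind : ∀ k, L * x k / (1 - x k) =
      ∏ m ∈ univ.erase k, (1 - F0 (x m)) / (1 - F1 (x m)))
    (i : Fin n) (hdel : x i ≤ 1 - Q) :
    (∀ j, j ≠ i →
        ((1 - x j) / x j) * ((1 - F1 (x j)) / (1 - F0 (x j))) ≥ Q / (1 - Q)) ∧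
      ((∀ t ∈ Set.Ioo (0 : ℝ) 1, (1 - F1 t) / (1 - F0 t) ≤ Q / (1 - Q)) →
        ∀ j, x j ≤ 1/2) := by
  obtain ⟨hxi0, hxi1⟩ := hx i
  have hQpos : (0:ℝ) < Q := by linarith
  have h1Q : (0:ℝ) < 1 - Q := by linarith
  have hFi := hFzero (x i) hdel
  have e1 : ∀ k : Fin n, (1 - F0 (x k)) / (1 - F1 (x k)) *
      ∏ m ∈ univ.erase k, (1 - F0 (x m)) / (1 - F1 (x m)) =
      ∏ m, (1 - F0 (x m)) / (1 - F1 (x m)) :=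
    fun k => Finset.mul_prod_erase univ (fun m => (1 - F0 (x m)) / (1 - F1 (x m))) (mem_univ k)
  have key : ∀ j, j ≠ i →
      x j / (1 - x j) * ((1 - F0 (x j)) / (1 - F1 (x j))) = x i / (1 - x i) := by
    intro j hj
    obtain ⟨hxj0, hxj1⟩ := hx j
    obtain ⟨hF1j, hF01j, hF0j⟩ := hF (x j) ⟨hxj0, hxj1⟩
    have hprod : (∏ m ∈ univ.erase j, (1 - F0 (x m)) / (1 - F1 (x m))) *
        ((1 - F0 (x j)) / (1 - F1 (x j))) =
        ∏ m ∈ univ.erase i, (1 - F0 (x m)) / (1 - F1 (x m)) := by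
      rw [mul_comm, e1 j, ← e1 i, hFi.1, hFi.2]
      simp
    have h2 : L * x j / (1 - x j) * ((1 - F0 (x j)) / (1 - F1 (x j))) =
        L * x i / (1 - x i) := by rw [hind j, hind i, hprod]
    have h1xj : (0:ℝ) < 1 - x j := by linarith
    have h1xi : (0:ℝ) < 1 - x i := by linarith
    have hBj : (0:ℝ) < 1 - F1 (x j) := by linarith
    have h2' := h2
    field_simp at h2' ⊢
    nlinarith [h2']
  have hxilt : x i / (1 - x i) ≤ (1 - Q) / Q := by
    apply div_le_div₀ (le_of_lt h1Q) hdel hQpos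
    linarith
  have hxipos : 0 < x i / (1 - x i) := div_pos hxi0 (by linarith)
  constructor
  · intro j hj
    obtain ⟨hxj0, hxj1⟩ := hx j
    obtain ⟨hF1j, hF01j, hF0j⟩ := hF (x j) ⟨hxj0, hxj1⟩
    have hk := key j hj
    have hA : (0:ℝ) < 1 - F0 (x j) := by linarith
    have hB : (0:ℝ) < 1 - F1 (x j) := by linarith
    have h1xj : (0:ℝ) < 1 - x j := by linarith
    have hinv : ((1 - x j) / x j) * ((1 - F1 (x j)) / (1 - F0 (x j))) =
        1 / (x j / (1 - x j) * ((1 - F0 (x j)) / (1 - F1 (x j)))) := by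
      rw [one_div, mul_inv, inv_div, inv_div]
    rw [hinv, hk]
    have hQQ : Q / (1 - Q) = 1 / ((1 - Q) / Q) := by
      field_simp
    rw [ge_iff_le, hQQ]
    exact one_div_le_one_div_of_le hxipos hxilt
  · intro hrat j
    by_cases hji : j = i
    · subst hji; linarith
    · obtain ⟨hxj0, hxj1⟩ := hx j
      obtain ⟨hF1j, hF01j, hF0j⟩ := hF (x j) ⟨hxj0, hxj1⟩
      have hk := key j hji
      have hr := hrat (x j) ⟨hxj0, hxj1⟩
      have hA : (0:ℝ) < 1 - F0 (x j) := by linarith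
      have hB : (0:ℝ) < 1 - F1 (x j) := by linarith
      have h1xj : (0:ℝ) < 1 - x j := by linarith
      have h1 : x j / (1 - x j) = (x i / (1 - x i)) * ((1 - F1 (x j)) / (1 - F0 (x j))) := by
        rw [← hk]
        field_simp
      have h2 : x j / (1 - x j) ≤ ((1 - Q) / Q) * (Q / (1 - Q)) := by
        rw [h1]
        exact mul_le_mul hxilt hr (by positivity) (by positivity)
      have h3 : ((1 - Q) / Q) * (Q / (1 - Q)) = 1 := by field_simp
      rw [h3, div_le_one h1xj] at h2
      linarith
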